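/- Let T be a bounded selfadjoint operator on a complex Hilbert space H and let a < b be real numbers. Then the spectrum of T is contained in the closed interval [a, b] if and only if Re⟨(T - a)x, (T - b)x⟩ ≤ 0 for all x ∈ H. -/

import Mathlib

open scoped InnerProductSpace

theorem stmt3 {H : Type*} [NormedAddCommGroup H] [InnerProductSpace ℂ H]
    [CompleteSpace H] (T : H →L[ℂ] H) (hT : IsSelfAdjoint T)
    (a b : ℝ) (hab : a < b) :
    spectrum ℂ T ⊆ (fun t : ℝ => (t : ℂ)) '' Set.Icc a b ↔
      ∀ x : H, (⟪T x - (a : ℂ) • x, T x - (b : ℂ) • x⟫_ℂ).re ≤ 0 := by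
  set A : H →L[ℂ] H := T - (a : ℂ) • 1 with hA
  set B : H →L[ℂ] H := T - (b : ℂ) • 1 with hB
  have hAsa : IsSelfAdjoint A := by
    refine hT.sub ?_
    rw [IsSelfAdjoint, star_smul]
    simp [Complex.conj_ofReal]
  have hBsa : IsSelfAdjoint B := by
    refine hT.sub ?_
    rw [IsSelfAdjoint, star_smul]
    simp [Complex.conj_ofReal]
  have hBA : B = A - (((b : ℂ) - a) • 1) := by
    rw [hA, hB, sub_smul]; abel
  have hcomm : Commute A B := by
    rw [hBA]
    exact (Commute.refl A).sub_right ((Commute.one_right A).smul_right _)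
  set S : H →L[ℂ] H := -(A * B) with hS
  have hABsa : IsSelfAdjoint (A * B) := by
    rw [IsSelfAdjoint, star_mul, hAsa.star_eq, hBsa.star_eq, hcomm.eq]
  have hSsa : IsSelfAdjoint S := hABsa.neg
  -- spectral mapping
  set p : Polynomial ℂ := -((Polynomial.X - Polynomial.C (a : ℂ)) *
      (Polynomial.X - Polynomial.C (b : ℂ))) with hp
  have hdeg : 0 < p.degree := by
    rw [hp, Polynomial.degree_neg, Polynomial.degree_mul, Polynomial.degree_X_sub_C,
      Polynomial.degree_X_sub_C]
    decide
  have haeval : Polynomial.aeval T p = S := by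
    simp [hp, hS, hA, hB, Algebra.algebraMap_eq_smul_one]
  have hmapS : spectrum ℂ S = (fun z => p.eval z) '' spectrum ℂ T := by
    rw [← haeval]
    exact spectrum.map_polynomial_aeval_of_degree_pos T p hdeg
  have hTres := hT.spectrumRestricts
  have hSres := hSsa.spectrumRestricts
  have hTC : spectrum ℂ T = (fun t : ℝ => (t : ℂ)) '' spectrum ℝ T := by
    rw [← hTres.algebraMap_image]; rfl
  have hSR : spectrum ℝ S = (fun t : ℝ => -((t - a) * (t - b))) '' spectrum ℝ T := by
    rw [← hSres.image, hmapS, hTC, Set.image_image, Set.image_image]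
    refine Set.image_congr fun t _ => ?_
    have he : Polynomial.eval (t : ℂ) p = (((-((t - a) * (t - b))) : ℝ) : ℂ) := by
      simp [hp]
    rw [he]
    simp
  -- RHS ↔ 0 ≤ S
  have hinner : ∀ x : H, S.reApplyInnerSelf x =
      -(⟪T x - (a : ℂ) • x, T x - (b : ℂ) • x⟫_ℂ).re := by
    intro x
    rw [ContinuousLinearMap.reApplyInnerSelf_apply]
    have h1 : S x = -(A (B x)) := rfl
    have h2 : ⟪A (B x), x⟫_ℂ = ⟪B x, A x⟫_ℂ := by
      conv_lhs => rw [← hAsa.adjoint_eq]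
      exact ContinuousLinearMap.adjoint_inner_left A x (B x)
    have h4 : A x = T x - (a : ℂ) • x := by simp [hA]
    have h5 : B x = T x - (b : ℂ) • x := by simp [hB]
    have key : (⟪B x, A x⟫_ℂ).re = (⟪T x - (a : ℂ) • x, T x - (b : ℂ) • x⟫_ℂ).re := by
      rw [← inner_conj_symm (𝕜 := ℂ) (B x) (A x), Complex.conj_re, h4, h5]
    rw [h1, inner_neg_left, map_neg, h2, RCLike.re_to_complex, key]
  have hRHS : (∀ x : H, (⟪T x - (a : ℂ) • x, T x - (b : ℂ) • x⟫_ℂ).re ≤ 0) ↔ 0 ≤ S := by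
    rw [ContinuousLinearMap.nonneg_iff_isPositive]
    constructor
    · intro h
      refine ⟨hSsa.isSymmetric, fun x => ?_⟩
      rw [hinner x]
      linarith [h x]
    · intro h x
      have := h.2 x
      rw [hinner x] at this
      linarith
  rw [hRHS, StarOrderedRing.nonneg_iff_spectrum_nonneg (R := ℝ) S hSsa, hSR]
  constructor
  · rintro h s ⟨t, ht, rfl⟩
    obtain ⟨u, hu, huv⟩ := h (hTC ▸ Set.mem_image_of_mem _ ht)
    have hut : u = t := Complex.ofReal_inj.mp huv
    subst hut
    show (0 : ℝ) ≤ -((u - a) * (u - b))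
    nlinarith [hu.1, hu.2]
  · intro h z hz
    rw [hTC] at hz
    obtain ⟨t, ht, rfl⟩ := hz
    have h0 : (0 : ℝ) ≤ -((t - a) * (t - b)) :=
      h _ (Set.mem_image_of_mem _ ht)
    exact ⟨t, ⟨by nlinarith, by nlinarith⟩, rfl⟩
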